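/- Let d ≥ 1 be an integer. There exists a constant C > 0 depending only on d with the following property: for every ε > 0 and every measurable a : ℝ^d → ℝ with ∫_{ℝ^d} |a(y)| dy ≤ ε and |a(y)| ≤ ε·(1+‖y‖)^{−d} for a.e. y, one has for all t > 0 and all x ∈ ℝ^d the pointwise bound |(g_t ⋆ a)(x)| ≤ C·ε·min((1+‖x‖)^{−d}, (1+t)^{−d/2}). -/

import Mathlib

open MeasureTheory

set_option maxHeartbeats 1000000

open MeasureTheory

lemma gauss_int (d : ℕ) {t : ℝ} (ht : 0 < t) :
    ∫ y : EuclideanSpace ℝ (Fin d), Real.exp (-‖y‖ ^ 2 / (4 * t)) =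
      (4 * Real.pi * t) ^ ((d : ℝ) / 2) := by
  have hb : (0:ℝ) < (4 * t)⁻¹ := by positivity
  have h := GaussianFourier.integral_rexp_neg_mul_sq_norm (V := EuclideanSpace ℝ (Fin d)) hb
  simp_rw [neg_div, div_eq_inv_mul, ← neg_mul] at *
  rw [h, finrank_euclideanSpace_fin, inv_inv]
  congr 1
  ring

lemma gauss_integrable (d : ℕ) {t : ℝ} (ht : 0 < t) :
    Integrable (fun y : EuclideanSpace ℝ (Fin d) ↦ Real.exp (-‖y‖ ^ 2 / (4 * t))) := by
  have hb : (0:ℝ) < (4 * t)⁻¹ := by positivity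
  have h := (GaussianFourier.integrable_cexp_neg_mul_sq_norm_add
      (b := ((4 * t)⁻¹ : ℂ)) (by simpa using hb) 0 (0 : EuclideanSpace ℝ (Fin d))).norm
  have key : ∀ y : EuclideanSpace ℝ (Fin d),
      ‖Complex.exp (-((4 * t)⁻¹:ℂ) * (‖y‖:ℂ) ^ 2 +
          0 * (inner ℝ (0 : EuclideanSpace ℝ (Fin d)) y : ℝ))‖
        = Real.exp (-‖y‖ ^ 2 / (4 * t)) := by
    intro y
    rw [Complex.norm_exp]
    congr 1
    simp [← Complex.ofReal_pow, neg_div, div_eq_inv_mul, neg_mul]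
    field_simp
    simp
  exact h.congr (Filter.Eventually.of_forall fun y ↦ (key y))

lemma half_bound {A B : ℝ} (hA : 0 < A) {s : ℝ} (hs : 0 ≤ s) (hB : A / 2 ≤ B) :
    B ^ (-s) ≤ 2 ^ s * A ^ (-s) := by
  have h1 : B ^ (-s) ≤ (A / 2) ^ (-s) :=
    Real.rpow_le_rpow_of_nonpos (by positivity) hB (neg_nonpos.2 hs)
  refine h1.trans_eq ?_
  rw [show A / 2 = A * 2⁻¹ by ring, Real.mul_rpow hA.le (by norm_num),
    Real.inv_rpow (by norm_num : (0:ℝ) ≤ 2), Real.rpow_neg (by norm_num : (0:ℝ) ≤ 2), inv_inv,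
    mul_comm]

lemma sup_bound (d : ℕ) {r t : ℝ} (hr : 0 < r) (ht : 0 < t) :
    (4 * Real.pi * t) ^ (-(d:ℝ)/2) * Real.exp (-r^2/(16*t)) ≤
      (4 / Real.pi) ^ ((d:ℝ)/2) * (1 + (d.factorial : ℝ)) * r ^ (-(d:ℝ)) := by
  have hπ := Real.pi_pos
  set u : ℝ := r ^ 2 / (16 * t) with hu
  have hu0 : 0 < u := by positivity
  have hr2 : r ^ 2 = 16 * t * u := by rw [hu]; field_simp
  have hbase : (0:ℝ) < 4 * Real.pi * t := by positivity
  have hue : u ^ ((d:ℝ)/2) * Real.exp (-u) ≤ 1 + (d.factorial : ℝ) := by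
    have h2 : u ^ ((d:ℝ)/2) ≤ 1 + u ^ d := by
      rcases le_or_gt u 1 with h | h
      · have := Real.rpow_le_one hu0.le h (by positivity : (0:ℝ) ≤ (d:ℝ)/2)
        nlinarith [pow_nonneg hu0.le d]
      · have h3 : u ^ ((d:ℝ)/2) ≤ u ^ ((d:ℝ)) :=
          Real.rpow_le_rpow_of_exponent_le h.le (by nlinarith [Nat.cast_nonneg (α := ℝ) d])
        rw [Real.rpow_natCast] at h3
        linarith
    have h4 : u ^ d * Real.exp (-u) ≤ (d.factorial : ℝ) := by
      have h5 := Real.pow_div_factorial_le_exp (x := u) hu0.le d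
      rw [Real.exp_neg]
      rw [div_le_iff₀ (by positivity : (0:ℝ) < (d.factorial : ℝ))] at h5
      rw [mul_inv_le_iff₀ (Real.exp_pos u)]
      linarith [h5]
    have h6 : Real.exp (-u) ≤ 1 := Real.exp_le_one_iff.2 (by linarith)
    calc u ^ ((d:ℝ)/2) * Real.exp (-u) ≤ (1 + u ^ d) * Real.exp (-u) := by
          apply mul_le_mul_of_nonneg_right h2 (Real.exp_pos _).le
      _ = Real.exp (-u) + u ^ d * Real.exp (-u) := by ring
      _ ≤ 1 + (d.factorial : ℝ) := add_le_add h6 h4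
  have key : (4 * Real.pi * t) ^ (-(d:ℝ)/2) * Real.exp (-r^2/(16*t)) * r ^ ((d:ℝ)) ≤
      (4 / Real.pi) ^ ((d:ℝ)/2) * (1 + (d.factorial : ℝ)) := by
    have hrd : r ^ ((d:ℝ)) = (16 * t * u) ^ ((d:ℝ)/2) := by
      rw [← hr2, ← Real.rpow_natCast r 2, ← Real.rpow_mul hr.le]
      congr 1
      ring
    have hexp : -r^2/(16*t) = -u := by rw [hu]; ring
    rw [hrd, hexp, neg_div, Real.rpow_neg hbase.le]
    have hdiv : (16 * t * u) ^ ((d:ℝ)/2) / (4 * Real.pi * t) ^ ((d:ℝ)/2)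
        = (4 / Real.pi) ^ ((d:ℝ)/2) * u ^ ((d:ℝ)/2) := by
      rw [← Real.div_rpow (by positivity) hbase.le, ← Real.mul_rpow (by positivity) hu0.le]
      congr 1
      field_simp
      ring
    calc ((4 * Real.pi * t) ^ ((d:ℝ)/2))⁻¹ * Real.exp (-u) * (16 * t * u) ^ ((d:ℝ)/2)
        = ((16 * t * u) ^ ((d:ℝ)/2) / (4 * Real.pi * t) ^ ((d:ℝ)/2)) * Real.exp (-u) := by
          ring
      _ = (4 / Real.pi) ^ ((d:ℝ)/2) * (u ^ ((d:ℝ)/2) * Real.exp (-u)) := by rw [hdiv]; ring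
      _ ≤ (4 / Real.pi) ^ ((d:ℝ)/2) * (1 + (d.factorial : ℝ)) := by
          apply mul_le_mul_of_nonneg_left hue (by positivity)
  have hrd0 : (0:ℝ) < r ^ ((d:ℝ)) := Real.rpow_pos_of_pos hr _
  rw [Real.rpow_neg hr.le, ← div_eq_mul_inv, le_div_iff₀ hrd0]
  exact key

/-- There is `C > 0` depending only on `d` such that for every `ε > 0`
and every measurable `a` with `∫|a| ≤ ε` and `|a(y)| ≤ ε (1+‖y‖)^{−d}` a.e., the
heat extension `g_t ⋆ a` (with `g_t(x) = (4πt)^{−d/2} exp(−‖x‖²/(4t))`) satisfies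
`|(g_t ⋆ a)(x)| ≤ C ε min((1+‖x‖)^{−d}, (1+t)^{−d/2})` for all `t > 0`, `x`. -/
theorem stmt7 (d : ℕ) (hd : 1 ≤ d) :
    ∃ C > (0 : ℝ), ∀ ε : ℝ, 0 < ε →
      ∀ a : EuclideanSpace ℝ (Fin d) → ℝ, Measurable a →
      (∫⁻ y, ENNReal.ofReal |a y|) ≤ ENNReal.ofReal ε →
      (∀ᵐ y : EuclideanSpace ℝ (Fin d) ∂volume, |a y| ≤ ε * (1 + ‖y‖) ^ (-(d : ℝ))) →
      ∀ t : ℝ, 0 < t → ∀ x : EuclideanSpace ℝ (Fin d),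
        |∫ y, (4 * Real.pi * t) ^ (-(d : ℝ) / 2) * Real.exp (-‖x - y‖ ^ 2 / (4 * t)) * a y| ≤
          C * ε * min ((1 + ‖x‖) ^ (-(d : ℝ))) ((1 + t) ^ (-(d : ℝ) / 2)) := by
  classical
  have hπ := Real.pi_pos
  set Cd : ℝ := (4 / Real.pi) ^ ((d:ℝ)/2) * (1 + (d.factorial : ℝ)) with hCd
  have hCd0 : 0 < Cd := by rw [hCd]; positivity
  refine ⟨2 ^ (d:ℝ) * (1 + Cd) + 2 ^ ((d:ℝ)/2), by positivity, ?_⟩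
  intro ε hε a ha hint habd t ht x
  set c : ℝ := (4 * Real.pi * t) ^ (-(d:ℝ)/2) with hc
  have hc0 : 0 < c := by rw [hc]; exact Real.rpow_pos_of_pos (by positivity) _
  set K : EuclideanSpace ℝ (Fin d) → ℝ := fun y ↦ c * Real.exp (-‖x - y‖ ^ 2 / (4 * t)) with hK
  have hK0 : ∀ y, 0 ≤ K y := fun y ↦ by
    have := Real.exp_pos (-‖x - y‖ ^ 2 / (4 * t)); rw [hK]; positivity
  have hgint : Integrable (fun y : EuclideanSpace ℝ (Fin d) ↦
      Real.exp (-‖x - y‖ ^ 2 / (4 * t))) :=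
    (integrable_comp_sub_left (fun z : EuclideanSpace ℝ (Fin d) ↦
      Real.exp (-‖z‖ ^ 2 / (4 * t))) x).2 (gauss_integrable d ht)
  have hKint : Integrable K := hgint.const_mul c
  have hKval : ∫ y, K y = 1 := by
    rw [hK]
    simp only []
    rw [integral_const_mul,
      integral_sub_left_eq_self (fun z : EuclideanSpace ℝ (Fin d) ↦
        Real.exp (-‖z‖ ^ 2 / (4 * t))) volume x,
      gauss_int d ht, hc, ← Real.rpow_add (by positivity),
      show -(d:ℝ)/2 + (d:ℝ)/2 = 0 by ring, Real.rpow_zero]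
  have hamemL1 : Integrable a := by
    refine ⟨ha.aestronglyMeasurable, ?_⟩
    have h1 : ∫⁻ y, (‖a y‖₊ : ENNReal) ∂volume ≤ ENNReal.ofReal ε := by
      simpa [← enorm_eq_nnnorm, ← ofReal_norm, Real.norm_eq_abs] using hint
    exact lt_of_le_of_lt h1 ENNReal.ofReal_lt_top
  have haL1 : ∫ y, |a y| ≤ ε := by
    rw [integral_eq_lintegral_of_nonneg_ae
      (Filter.Eventually.of_forall fun y ↦ abs_nonneg _) ha.abs.aestronglyMeasurable]
    exact ENNReal.toReal_le_of_le_ofReal hε.le hint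
  set I : ℝ := ∫ y, K y * |a y| with hI
  have hI0 : 0 ≤ I := integral_nonneg fun y ↦ mul_nonneg (hK0 y) (abs_nonneg _)
  have hLHS : |∫ y, c * Real.exp (-‖x - y‖ ^ 2 / (4 * t)) * a y| ≤ I := by
    calc |∫ y, c * Real.exp (-‖x - y‖ ^ 2 / (4 * t)) * a y|
        ≤ ∫ y, |c * Real.exp (-‖x - y‖ ^ 2 / (4 * t)) * a y| := by
          have h0 := norm_integral_le_integral_norm (μ := volume)
            (fun y : EuclideanSpace ℝ (Fin d) ↦ c * Real.exp (-‖x - y‖ ^ 2 / (4 * t)) * a y)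
          simp only [Real.norm_eq_abs] at h0
          exact h0
      _ = I := by
          rw [hI]
          congr 1
          funext y
          rw [abs_mul, abs_of_nonneg (hK0 y)]
  -- Bound A : I ≤ ε
  have hA : I ≤ ε := by
    have hmono : ∀ᵐ y ∂(volume : Measure (EuclideanSpace ℝ (Fin d))),
        K y * |a y| ≤ ε * K y := by
      filter_upwards [habd] with y hy
      have h1 : |a y| ≤ ε := by
        refine hy.trans ?_
        have h2 : (1 + ‖y‖ : ℝ) ^ (-(d:ℝ)) ≤ 1 :=
          Real.rpow_le_one_of_one_le_of_nonpos (by linarith [norm_nonneg y])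
            (by simp [Nat.cast_nonneg])
        nlinarith
      calc K y * |a y| ≤ K y * ε := mul_le_mul_of_nonneg_left h1 (hK0 y)
        _ = ε * K y := mul_comm _ _
    have h3 := integral_mono_of_nonneg
      (Filter.Eventually.of_forall fun y ↦ mul_nonneg (hK0 y) (abs_nonneg _))
      (hKint.const_mul ε) hmono
    rwa [integral_const_mul, hKval, mul_one] at h3
  -- Bound B : I ≤ c * ε
  have hB : I ≤ c * ε := by
    have hmono : ∀ᵐ y ∂(volume : Measure (EuclideanSpace ℝ (Fin d))),
        K y * |a y| ≤ c * |a y| := by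
      refine Filter.Eventually.of_forall fun y ↦ ?_
      have h1 : K y ≤ c := by
        rw [hK]
        simp only []
        nlinarith [Real.exp_le_one_iff.2 (show -‖x - y‖ ^ 2 / (4 * t) ≤ 0 by
          rw [neg_div]; exact neg_nonpos.2 (by positivity)), hc0,
          Real.exp_pos (-‖x - y‖ ^ 2 / (4 * t))]
      exact mul_le_mul_of_nonneg_right h1 (abs_nonneg _)
    have h3 := integral_mono_of_nonneg
      (Filter.Eventually.of_forall fun y ↦ mul_nonneg (hK0 y) (abs_nonneg _))
      (hamemL1.abs.const_mul c) hmono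
    rw [integral_const_mul] at h3
    exact h3.trans (mul_le_mul_of_nonneg_left haL1 hc0.le)
  -- Bound C : spatial decay
  have hC : 0 < ‖x‖ → I ≤ ε * (2^(d:ℝ) * (1+‖x‖)^(-(d:ℝ))) + Cd * ‖x‖^(-(d:ℝ)) * ε := by
    intro hx
    set c2 : ℝ := c * Real.exp (-‖x‖^2/(16*t)) with hc2
    have hc20 : 0 ≤ c2 := by
      have := Real.exp_pos (-‖x‖^2/(16*t)); rw [hc2]; positivity
    have hmono : ∀ᵐ y ∂(volume : Measure (EuclideanSpace ℝ (Fin d))),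
        K y * |a y| ≤ ε * (2^(d:ℝ) * (1+‖x‖)^(-(d:ℝ))) * K y + c2 * |a y| := by
      filter_upwards [habd] with y hy
      rcases le_or_gt (‖x‖/2) ‖y‖ with h | h
      · have h1 : (1+‖y‖:ℝ)^(-(d:ℝ)) ≤ 2^(d:ℝ) * (1+‖x‖)^(-(d:ℝ)) :=
          half_bound (by positivity) (Nat.cast_nonneg d) (by linarith)
        have h2 : |a y| ≤ ε * (2^(d:ℝ) * (1+‖x‖)^(-(d:ℝ))) :=
          hy.trans (mul_le_mul_of_nonneg_left h1 hε.le)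
        have h3 : K y * |a y| ≤ K y * (ε * (2^(d:ℝ) * (1+‖x‖)^(-(d:ℝ)))) :=
          mul_le_mul_of_nonneg_left h2 (hK0 y)
        nlinarith [mul_nonneg hc20 (abs_nonneg (a y))]
      · have hxy : ‖x‖/2 ≤ ‖x - y‖ := by
          have h4 : ‖x‖ ≤ ‖x - y‖ + ‖y‖ := by
            simpa using norm_add_le (x - y) y
          linarith
        have hKle : K y ≤ c2 := by
          rw [hK, hc2]
          simp only []
          refine mul_le_mul_of_nonneg_left ?_ hc0.le
          apply Real.exp_le_exp.2
          rw [neg_div, neg_div, neg_le_neg_iff, div_le_div_iff₀ (by positivity) (by positivity)]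
          have h3 : ‖x‖^2/4 ≤ ‖x - y‖^2 := by nlinarith [hxy, norm_nonneg x]
          nlinarith [mul_le_mul_of_nonneg_right h3 ht.le]
        have h5 : K y * |a y| ≤ c2 * |a y| :=
          mul_le_mul_of_nonneg_right hKle (abs_nonneg _)
        have h6 : 0 ≤ ε * (2^(d:ℝ) * (1+‖x‖)^(-(d:ℝ))) * K y := by
          have := hK0 y
          have h7 : (0:ℝ) ≤ (1+‖x‖)^(-(d:ℝ)) := Real.rpow_nonneg (by positivity) _
          have h8 : (0:ℝ) ≤ (2:ℝ)^(d:ℝ) := Real.rpow_nonneg (by norm_num) _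
          positivity
        linarith
    have hbint : Integrable (fun y ↦ ε * (2^(d:ℝ) * (1+‖x‖)^(-(d:ℝ))) * K y + c2 * |a y|) :=
      (hKint.const_mul _).add (hamemL1.abs.const_mul _)
    have h9 := integral_mono_of_nonneg
      (Filter.Eventually.of_forall fun y ↦ mul_nonneg (hK0 y) (abs_nonneg _)) hbint hmono
    have e1 : ∫ y, ε * (2^(d:ℝ) * (1+‖x‖)^(-(d:ℝ))) * K y
        = ε * (2^(d:ℝ) * (1+‖x‖)^(-(d:ℝ))) := by
      rw [integral_const_mul, hKval, mul_one]
    have e2 : ∫ y, c2 * |a y| = c2 * ∫ y, |a y| := integral_const_mul c2 _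
    rw [integral_add (hKint.const_mul _) (hamemL1.abs.const_mul _), e1, e2] at h9
    have hc2le : c2 ≤ Cd * ‖x‖^(-(d:ℝ)) := by
      rw [hc2, hc, hCd]
      exact sup_bound d hx ht
    refine h9.trans ?_
    have h10 : c2 * ∫ y, |a y| ≤ Cd * ‖x‖^(-(d:ℝ)) * ε := by
      calc c2 * ∫ y, |a y| ≤ c2 * ε :=
            mul_le_mul_of_nonneg_left haL1 hc20
        _ ≤ Cd * ‖x‖^(-(d:ℝ)) * ε := mul_le_mul_of_nonneg_right hc2le hε.le
    linarith
  -- spatial bound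
  have hXb : I ≤ (2^(d:ℝ) * (1 + Cd)) * ε * (1+‖x‖)^(-(d:ℝ)) := by
    have hp0 : (0:ℝ) ≤ (1+‖x‖)^(-(d:ℝ)) := Real.rpow_nonneg (by positivity) _
    have h2d : (0:ℝ) < (2:ℝ)^(d:ℝ) := Real.rpow_pos_of_pos (by norm_num) _
    rcases le_or_gt ‖x‖ 1 with h | h
    · have h1 : (1:ℝ) ≤ 2^(d:ℝ) * (1+‖x‖)^(-(d:ℝ)) := by
        have h2 := half_bound (A := 1+‖x‖) (B := 1) (by positivity)
          (s := (d:ℝ)) (Nat.cast_nonneg d) (by linarith)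
        simpa using h2
      calc I ≤ ε := hA
        _ ≤ (2^(d:ℝ) * (1+‖x‖)^(-(d:ℝ))) * ε := by
            nlinarith [mul_le_mul_of_nonneg_right h1 hε.le]
        _ ≤ (2^(d:ℝ) * (1 + Cd)) * ε * (1+‖x‖)^(-(d:ℝ)) := by
            have hnn : 0 ≤ 2^(d:ℝ) * ε * (1+‖x‖)^(-(d:ℝ)) * Cd := by positivity
            linarith [hnn]
    · have h2 : ‖x‖^(-(d:ℝ)) ≤ 2^(d:ℝ) * (1+‖x‖)^(-(d:ℝ)) :=
        half_bound (by positivity) (Nat.cast_nonneg d) (by linarith)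
      have h3 := hC (by linarith)
      calc I ≤ ε * (2^(d:ℝ) * (1+‖x‖)^(-(d:ℝ))) + Cd * ‖x‖^(-(d:ℝ)) * ε := h3
        _ ≤ ε * (2^(d:ℝ) * (1+‖x‖)^(-(d:ℝ))) + Cd * (2^(d:ℝ) * (1+‖x‖)^(-(d:ℝ))) * ε := by
            have h4 := mul_le_mul_of_nonneg_right
              (mul_le_mul_of_nonneg_left h2 hCd0.le) hε.le
            linarith [h4]
        _ = (2^(d:ℝ) * (1 + Cd)) * ε * (1+‖x‖)^(-(d:ℝ)) := by ring
  -- time bound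
  have hTb : I ≤ 2^((d:ℝ)/2) * ε * (1+t)^(-(d:ℝ)/2) := by
    have hq0 : (0:ℝ) ≤ (1+t)^(-(d:ℝ)/2) := Real.rpow_nonneg (by linarith) _
    have h2d : (0:ℝ) < (2:ℝ)^((d:ℝ)/2) := Real.rpow_pos_of_pos (by norm_num) _
    rcases le_or_gt t 1 with h | h
    · have h1 : (1:ℝ) ≤ 2^((d:ℝ)/2) * (1+t)^(-(d:ℝ)/2) := by
        have h2 := half_bound (A := 1+t) (B := 1) (by linarith)
          (s := (d:ℝ)/2) (by positivity) (by linarith)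
        rw [show -((d:ℝ)/2) = -(d:ℝ)/2 by ring] at h2
        simpa using h2
      calc I ≤ ε := hA
        _ ≤ (2^((d:ℝ)/2) * (1+t)^(-(d:ℝ)/2)) * ε := by
            nlinarith [mul_le_mul_of_nonneg_right h1 hε.le]
        _ = 2^((d:ℝ)/2) * ε * (1+t)^(-(d:ℝ)/2) := by ring
    · have h1 : c ≤ (1+t)^(-(d:ℝ)/2) := by
        rw [hc]
        have h4 : (1+t) ≤ 4*Real.pi*t := by nlinarith [Real.pi_gt_three]
        exact Real.rpow_le_rpow_of_nonpos (by linarith) h4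
          (by rw [neg_div]; exact neg_nonpos.2 (by positivity))
      have h2 : (1:ℝ) ≤ 2^((d:ℝ)/2) := Real.one_le_rpow (by norm_num) (by positivity)
      calc I ≤ c * ε := hB
        _ ≤ (1+t)^(-(d:ℝ)/2) * ε := mul_le_mul_of_nonneg_right h1 hε.le
        _ ≤ 2^((d:ℝ)/2) * ε * (1+t)^(-(d:ℝ)/2) := by
            have hnn : 0 ≤ (2^((d:ℝ)/2) - 1) * ε * (1+t)^(-(d:ℝ)/2) :=
              mul_nonneg (mul_nonneg (by linarith) hε.le) hq0
            linarith [hnn]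
  -- conclusion
  refine hLHS.trans ?_
  have hp0 : (0:ℝ) ≤ (1+‖x‖)^(-(d:ℝ)) := Real.rpow_nonneg (by positivity) _
  have hq0 : (0:ℝ) ≤ (1+t)^(-(d:ℝ)/2) := Real.rpow_nonneg (by linarith) _
  have h2d : (0:ℝ) < (2:ℝ)^(d:ℝ) := Real.rpow_pos_of_pos (by norm_num) _
  have h2d2 : (0:ℝ) < (2:ℝ)^((d:ℝ)/2) := Real.rpow_pos_of_pos (by norm_num) _
  set CC : ℝ := 2 ^ (d:ℝ) * (1 + Cd) + 2 ^ ((d:ℝ)/2) with hCC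
  have hCC0 : 0 ≤ CC * ε := by positivity
  rw [mul_min_of_nonneg _ _ hCC0]
  refine le_min ?_ ?_
  · refine hXb.trans ?_
    have h5 : (2^(d:ℝ) * (1 + Cd)) ≤ CC := by rw [hCC]; linarith
    have h6 := mul_le_mul_of_nonneg_right h5 (mul_nonneg hε.le hp0)
    linarith [h6]
  · refine hTb.trans ?_
    have h5 : (2:ℝ)^((d:ℝ)/2) ≤ CC := by
      rw [hCC]
      nlinarith [h2d, hCd0]
    have h6 := mul_le_mul_of_nonneg_right h5 (mul_nonneg hε.le hq0)
    linarith [h6]
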